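/- A finite irreflexive oriented graph G has an iot-injective homomorphism to the reflexive tournament T_2^r if and only if no oriented graph F in S ∪ P has an iot-injective homomorphism to G, where S is the set of all orientations of the star K_{1,3} and P is the set of oriented paths with vertices v_0, v_1, ..., v_{2k} (k ≥ 2) such that the arcs among {v_1, ..., v_{2k-1}} form two disjoint alternating matchings, the arc joining v_0 and v_1 has the same orientation (with respect to the beginning and end of the path) as the arc joining v_2 and v_3, and the arc joining v_{2k-1} and v_{2k} has the same orientation as the arc joining v_{2k-3} and v_{2k-2}. -/

import Mathlib

/-- A homomorphism of directed graphs (given as binary relations). -/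
def IsHom {A : Type} {B : Type} (R : A → A → Prop) (S : B → B → Prop) (f : A → B) : Prop :=
  ∀ x y, R x y → S (f x) (f y)

/-- ios-injectivity: injective on in-neighbourhoods and on out-neighbourhoods separately. -/
def IosInj {A : Type} {B : Type} (R : A → A → Prop) (f : A → B) : Prop :=
  ∀ x : A, Set.InjOn f {y | R y x} ∧ Set.InjOn f {y | R x y}

/-- iot-injectivity: injective on the union of in- and out-neighbourhoods. -/
def IotInj {A : Type} {B : Type} (R : A → A → Prop) (f : A → B) : Prop :=
  ∀ x : A, Set.InjOn f ({y | R y x} ∪ {y | R x y})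

/-- An oriented graph: between two distinct vertices at most one arc. -/
def IsOriented {A : Type} (R : A → A → Prop) : Prop :=
  ∀ x y, x ≠ y → ¬(R x y ∧ R y x)

/-- Irreflexive (no loops). -/
def NoLoops {A : Type} (R : A → A → Prop) : Prop := ∀ x, ¬ R x x

/-- `R` is (isomorphic to) a subgraph of `S`: an injective arc-preserving map. -/
def Subg {A : Type} {B : Type} (R : A → A → Prop) (S : B → B → Prop) : Prop :=
  ∃ g : A → B, Function.Injective g ∧ IsHom R S g

/-- There exists an ios-injective homomorphism of `R` to `S`. -/
def IosHomEx {A : Type} {B : Type} (R : A → A → Prop) (S : B → B → Prop) : Prop :=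
  ∃ g : A → B, IsHom R S g ∧ IosInj R g

/-- There exists an iot-injective homomorphism of `R` to `S`. -/
def IotHomEx {A : Type} {B : Type} (R : A → A → Prop) (S : B → B → Prop) : Prop :=
  ∃ g : A → B, IsHom R S g ∧ IotInj R g

/-- Converse (all arcs reversed). -/
def convRel {A : Type} (R : A → A → Prop) : A → A → Prop := fun x y => R y x

/-- Transitive tournament `T_n`. -/
def TTrel (n : ℕ) : Fin n → Fin n → Prop := fun i j => i < j

/-- Reflexive transitive tournament `T_2^r`. -/
def T2r : Fin 2 → Fin 2 → Prop := fun i j => i ≤ j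

/-- Reflexive one-vertex tournament `T_1^r`. -/
def T1r : PUnit → PUnit → Prop := fun _ _ => True

/-- Directed path `P_N` on `N` vertices. -/
def DPathRel (N : ℕ) : Fin N → Fin N → Prop := fun x y => (y : ℕ) = (x : ℕ) + 1

/-- Directed cycle `C_m` on `m` vertices. -/
def DCycRel (m : ℕ) : Fin m → Fin m → Prop := fun x y => (y : ℕ) = ((x : ℕ) + 1) % m

/-- Oriented path on `n+1` vertices: edge `t` (between `v_t` and `v_{t+1}`) is
oriented forwards iff `σ t = true`. -/
def OPathRel (n : ℕ) (σ : ℕ → Bool) : Fin (n + 1) → Fin (n + 1) → Prop :=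
  fun x y => ∃ t : ℕ, t < n ∧
    ((σ t = true ∧ (x : ℕ) = t ∧ (y : ℕ) = t + 1) ∨
     (σ t = false ∧ (x : ℕ) = t + 1 ∧ (y : ℕ) = t))

/-- Oriented cycle on `m` vertices: edge `t` (between `v_t` and `v_{t+1 mod m}`) is
oriented forwards iff `σ t = true`. -/
def OCycRel (m : ℕ) (σ : ℕ → Bool) : Fin m → Fin m → Prop :=
  fun x y => ∃ t : ℕ, t < m ∧
    ((σ t = true ∧ (x : ℕ) = t ∧ (y : ℕ) = (t + 1) % m) ∨
     (σ t = false ∧ (x : ℕ) = (t + 1) % m ∧ (y : ℕ) = t))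

/-- The hat `H_3`: arcs `v_0 → v_1` and `v_2 → v_1`. -/
def H3rel : Fin 3 → Fin 3 → Prop := fun i j => (i = 0 ∧ j = 1) ∨ (i = 2 ∧ j = 1)

/-- `H_4`: arcs `h_0 → h_3`, `h_1 → h_3`, `h_2 → h_3`. -/
def H4rel : Fin 4 → Fin 4 → Prop := fun i j => (i = 0 ∨ i = 1 ∨ i = 2) ∧ j = 3

/-- `A_4`: arcs `h_0 → h_2`, `h_1 → h_2`, `h_2 → h_3`. -/
def A4rel : Fin 4 → Fin 4 → Prop := fun i j => ((i = 0 ∨ i = 1) ∧ j = 2) ∨ (i = 2 ∧ j = 3)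

/-- `H_5`: two directed paths of length two with a common initial vertex `0`:
arcs `0→1`, `1→2`, `0→3`, `3→4`. -/
def H5rel : Fin 5 → Fin 5 → Prop :=
  fun i j => (i = 0 ∧ j = 1) ∨ (i = 1 ∧ j = 2) ∨ (i = 0 ∧ j = 3) ∨ (i = 3 ∧ j = 4)

/-- `B_2`: arcs `a→b`, `c→b`, `c→d`, `e→d` (vertices `a,b,c,d,e = 0,1,2,3,4`). -/
def B2rel : Fin 5 → Fin 5 → Prop :=
  fun i j => (i = 0 ∧ j = 1) ∨ (i = 2 ∧ j = 1) ∨ (i = 2 ∧ j = 3) ∨ (i = 4 ∧ j = 3)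

/-- `X_2`: orientation of `K_{1,4}` with centre `0` of in-degree 2 and out-degree 2:
arcs `1→0`, `2→0`, `0→3`, `0→4`. -/
def X2rel : Fin 5 → Fin 5 → Prop :=
  fun i j => ((i = 1 ∨ i = 2) ∧ j = 0) ∨ (i = 0 ∧ (j = 3 ∨ j = 4))

/-- An orientation of the star `K_{1,3}`: centre `none`, leaves `some i`;
edge `i` points away from the centre iff `ε i = true`. -/
def starRel (ε : Fin 3 → Bool) : Option (Fin 3) → Option (Fin 3) → Prop :=
  fun u v => ∃ i : Fin 3,
    (ε i = true ∧ u = none ∧ v = some i) ∨ (ε i = false ∧ u = some i ∧ v = none)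

/-- An oriented `k`-colouring: for arcs `xy` and `vw`, `f x = f w → f y ≠ f v`. -/
def OrCol {A : Type} (R : A → A → Prop) {k : ℕ} (f : A → Fin k) : Prop :=
  ∀ x y v w, R x y → R v w → f x = f w → f y ≠ f v

/-- Proper: distinct adjacent vertices get different colours. -/
def ProperCol {A : Type} {B : Type} (R : A → A → Prop) (f : A → B) : Prop :=
  ∀ x y, R x y → x ≠ y → f x ≠ f y

/-- Disjoint union of two directed graphs. -/
def sumRel {A B : Type} (R : A → A → Prop) (S : B → B → Prop) : A ⊕ B → A ⊕ B → Prop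
  | Sum.inl a, Sum.inl a' => R a a'
  | Sum.inr b, Sum.inr b' => S b b'
  | _, _ => False

/-- Net-length of the oriented cycle on `m` vertices with orientation `σ`:
number of forwards arcs minus number of backwards arcs. -/
def netLen (m : ℕ) (σ : ℕ → Bool) : ℤ :=
  (((Finset.range m).filter fun t => σ t = true).card : ℤ) -
    (((Finset.range m).filter fun t => σ t = false).card : ℤ)

/-- Undirected connectivity relation of a directed graph. -/
def UConn {V : Type} (E : V → V → Prop) : V → V → Prop :=
  Relation.ReflTransGen (fun a b => E a b ∨ E b a)

/-- The relation induced on the connected component of `x`. -/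
def componentRel {V : Type} (E : V → V → Prop) (x : V) :
    {y : V // UConn E x y} → {y : V // UConn E x y} → Prop :=
  fun a b => E a.val b.val

/-- Isomorphism of directed graphs. -/
def IsoRel {A B : Type} (R : A → A → Prop) (S : B → B → Prop) : Prop :=
  ∃ e : A ≃ B, ∀ a a', R a a' ↔ S (e a) (e a')

/-- An alternating matching in the oriented path on `n+1` vertices (edges `0,…,n-1`,
orientations `σ`): `μ t` means edge `t` is in the matching.  It is a matching,
saturates every internal (degree-two) vertex, and consecutive matching edges have
opposite orientations. -/
def PathAltMatching (n : ℕ) (σ : ℕ → Bool) (μ : ℕ → Prop) : Prop :=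
  (∀ t, μ t → t < n) ∧
  (∀ t, ¬(μ t ∧ μ (t + 1))) ∧
  (∀ v, 1 ≤ v → v + 1 ≤ n → (μ (v - 1) ∨ μ v)) ∧
  (∀ t t', μ t → μ t' → t < t' → (∀ s, t < s → s < t' → ¬ μ s) → σ t ≠ σ t')

/-- An alternating matching in the oriented cycle on `m` vertices (edges mod `m`):
a matching saturating every vertex whose successive edges (cyclically) have
opposite orientations. -/
def CycAltMatching (m : ℕ) (σ : ℕ → Bool) (μ : ℕ → Prop) : Prop :=
  (∀ t, μ t → t < m) ∧
  (∀ t, t < m → ¬(μ t ∧ μ ((t + 1) % m))) ∧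
  (∀ v, v < m → (μ v ∨ μ ((v + m - 1) % m))) ∧
  (∀ t d, t < m → 0 < d → d < m → μ t → μ ((t + d) % m) →
    (∀ s, 0 < s → s < d → ¬ μ ((t + s) % m)) → σ t ≠ σ ((t + d) % m))
section Aux16

open Classical

variable {V : Type}

/-- underlying adjacency -/
def adjR (E : V → V → Prop) (x y : V) : Prop := E x y ∨ E y x

lemma adjR_symm {E : V → V → Prop} {x y : V} (h : adjR E x y) : adjR E y x := h.symm

lemma adjR_ne {E : V → V → Prop} (hirr : NoLoops E) {x y : V} (h : adjR E x y) : x ≠ y := by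
  rintro rfl; cases h with
  | inl h => exact hirr x h
  | inr h => exact hirr x h

/-- Bool to Fin 2 -/
def bcol (b : Bool) : Fin 2 := if b then 1 else 0

lemma bcol_le {x y : Bool} (h : x = false ∨ y = true) : bcol x ≤ bcol y := by
  cases x <;> cases y <;> simp_all [bcol] <;> decide

lemma bcol_inj {x y : Bool} (h : bcol x = bcol y) : x = y := by
  cases x <;> cases y <;> simp_all [bcol]

/-- the coloring pattern with period 4 -/
def pat (off : ℕ) (a : Bool) (i : ℕ) : Bool := xor a (decide (2 ≤ (i + off) % 4))

lemma pat_add_two (off : ℕ) (a : Bool) (i : ℕ) : pat off a (i + 2) = ! pat off a i := by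
  unfold pat
  have : decide (2 ≤ (i + 2 + off) % 4) = ! decide (2 ≤ (i + off) % 4) := by
    rw [← decide_not, decide_eq_decide]; omega
  rw [this]
  cases a <;> cases (decide (2 ≤ (i + off) % 4)) <;> rfl

lemma pat_add_four (off : ℕ) (a : Bool) (i : ℕ) : pat off a (i + 4) = pat off a i := by
  have : i + 4 = (i + 2) + 2 := by ring
  rw [this, pat_add_two, pat_add_two, Bool.not_not]

lemma pat_add_mul_four (off : ℕ) (a : Bool) (i q : ℕ) : pat off a (i + 4 * q) = pat off a i := by
  induction q with
  | zero => rfl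
  | succ q ih =>
    have : i + 4 * (q + 1) = (i + 4 * q) + 4 := by ring
    rw [this, pat_add_four, ih]

lemma pat_diff_iff (off : ℕ) (a : Bool) (i : ℕ) :
    pat off a i ≠ pat off a (i + 1) ↔ (i + off) % 2 = 1 := by
  unfold pat
  have hne : ∀ b c : Bool, (xor a b ≠ xor a c) ↔ b ≠ c := by
    cases a <;> decide
  rw [hne, Ne, decide_eq_decide]
  omega

/-- consecutive elements of F at odd distance -/
lemma consec_odd {F : ℕ → Prop} :
    ∀ g p q, q - p = g → F p → F q → p < q → (q - p) % 2 = 1 →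
    ∃ c d, p ≤ c ∧ c + d ≤ q ∧ 0 < d ∧ d % 2 = 1 ∧ F c ∧ F (c + d) ∧
      ∀ s, 0 < s → s < d → ¬ F (c + s) := by
  intro g
  induction g using Nat.strong_induction_on with
  | _ g ih =>
    intro p q hg hp hq hlt hodd
    by_cases hmid : ∃ r, p < r ∧ r < q ∧ F r
    · obtain ⟨r, hpr, hrq, hFr⟩ := hmid
      rcases Nat.mod_two_eq_zero_or_one (r - p) with he | ho
      · -- then q - r is odd
        have h1 : (q - r) % 2 = 1 := by omega
        obtain ⟨c, d, h⟩ := ih (q - r) (by omega) r q rfl hFr hq hrq h1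
        exact ⟨c, d, by omega, h.2.1, h.2.2.1, h.2.2.2.1, h.2.2.2.2⟩
      · obtain ⟨c, d, h⟩ := ih (r - p) (by omega) p r rfl hp hFr hpr ho
        exact ⟨c, d, h.1, by omega, h.2.2.1, h.2.2.2.1, h.2.2.2.2⟩
    · push_neg at hmid
      exact ⟨p, q - p, le_refl _, by omega, by omega, hodd, hp, by
        have : p + (q - p) = q := by omega
        rw [this]; exact hq, by
        intro s hs1 hs2 hFs
        exact absurd hFs (hmid (p + s) (by omega) (by omega))⟩

/-- No iot-injective homomorphism from a "bad path" to T2r. -/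
lemma no_bad_to_T2r {k : ℕ} {σ : ℕ → Bool} (hk : 2 ≤ k)
    (h02 : σ 0 = σ 2) (hend : σ (2 * k - 1) = σ (2 * k - 3))
    (h : Fin (2 * k + 1) → Fin 2)
    (hhom : IsHom (OPathRel (2 * k) σ) T2r h)
    (hinj : IotInj (OPathRel (2 * k) σ) h) : False := by
  obtain ⟨j, rfl⟩ : ∃ j, k = j + 2 := ⟨k - 2, by omega⟩
  have hK4 : 4 ≤ 2 * (j + 2) := by omega
  set H : ℕ → ℕ := fun t => (h ⟨min t (2 * (j + 2)), by omega⟩ : ℕ) with hH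
  have hHeq : ∀ (t : ℕ) (ht : t ≤ 2 * (j + 2)), H t = ((h ⟨t, by omega⟩ : Fin 2) : ℕ) := by
    intro t ht
    simp only [hH, Nat.min_eq_left ht]
  have hHlt : ∀ t, H t ≤ 1 := by
    intro t; have := (h ⟨min t (2 * (j + 2)), by omega⟩).isLt; simp only [hH]; omega
  have hmem : ∀ s, s < 2 * (j + 2) → ∀ x y : Fin (2 * (j + 2) + 1),
      (x : ℕ) = s → (y : ℕ) = s + 1 →
      (x ∈ ({z | OPathRel (2 * (j + 2)) σ z y} ∪ {z | OPathRel (2 * (j + 2)) σ y z}) ∧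
       y ∈ ({z | OPathRel (2 * (j + 2)) σ z x} ∪ {z | OPathRel (2 * (j + 2)) σ x z})) := by
    intro s hs x y hx hy
    cases hb : σ s with
    | true =>
      constructor
      · exact Or.inl ⟨s, hs, Or.inl ⟨hb, hx, hy⟩⟩
      · exact Or.inr ⟨s, hs, Or.inl ⟨hb, hx, hy⟩⟩
    | false =>
      constructor
      · exact Or.inr ⟨s, hs, Or.inr ⟨hb, hy, hx⟩⟩
      · exact Or.inl ⟨s, hs, Or.inr ⟨hb, hy, hx⟩⟩
  have F1 : ∀ t, t + 2 ≤ 2 * (j + 2) → H t ≠ H (t + 2) := by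
    intro t ht heq
    have hy := (hmem t (by omega) ⟨t, by omega⟩ ⟨t + 1, by omega⟩ rfl rfl).1
    have hz := (hmem (t + 1) (by omega) ⟨t + 1, by omega⟩ ⟨t + 2, by omega⟩ rfl rfl).2
    rw [hHeq t (by omega), hHeq (t + 2) (by omega)] at heq
    have heq' : h ⟨t, by omega⟩ = h ⟨t + 2, by omega⟩ := by
      apply Fin.ext; omega
    have := hinj ⟨t + 1, by omega⟩ hy hz heq'
    have : t = t + 2 := congrArg Fin.val this
    omega
  have F2t : ∀ t, t < 2 * (j + 2) → σ t = true → H t ≤ H (t + 1) := by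
    intro t ht hb
    have harc : OPathRel (2 * (j + 2)) σ ⟨t, by omega⟩ ⟨t + 1, by omega⟩ :=
      ⟨t, ht, Or.inl ⟨hb, rfl, rfl⟩⟩
    have := hhom _ _ harc
    simp only [T2r, Fin.le_def] at this
    rw [hHeq t (by omega), hHeq (t + 1) (by omega)]
    exact this
  have F2f : ∀ t, t < 2 * (j + 2) → σ t = false → H (t + 1) ≤ H t := by
    intro t ht hb
    have harc : OPathRel (2 * (j + 2)) σ ⟨t + 1, by omega⟩ ⟨t, by omega⟩ :=
      ⟨t, ht, Or.inr ⟨hb, rfl, rfl⟩⟩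
    have := hhom _ _ harc
    simp only [T2r, Fin.le_def] at this
    rw [hHeq t (by omega), hHeq (t + 1) (by omega)]
    exact this
  have G2 : ∀ t, t < 2 * (j + 2) → H t ≠ H (t + 1) → (σ t = true ↔ H t = 0) := by
    intro t ht hd
    have b0 := hHlt t; have b1 := hHlt (t + 1)
    constructor
    · intro hb; have := F2t t ht hb; omega
    · intro hv
      cases hb : σ t with
      | true => rfl
      | false => have := F2f t ht hb; omega
  have G1 : ∀ t, t + 2 ≤ 2 * (j + 2) → (H t ≠ H (t + 1) ↔ ¬ H (t + 1) ≠ H (t + 2)) := by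
    intro t ht
    have := F1 t ht
    have b0 := hHlt t; have b1 := hHlt (t + 1); have b2 := hHlt (t + 2)
    constructor
    · intro h1 h2; omega
    · intro h1; omega
  have key : ∀ t, t + 3 ≤ 2 * (j + 2) → H t ≠ H (t + 1) → H (t + 2) ≠ H (t + 3) →
      σ t ≠ σ (t + 2) := by
    intro t ht hd1 hd2 heq
    have e1 := G2 t (by omega) hd1
    have e2 := G2 (t + 2) (by omega) hd2
    have hne := F1 t (by omega)
    have b0 := hHlt t; have b2 := hHlt (t + 2)
    cases hb : σ t with
    | true =>
      rw [hb] at heq e1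
      exact hne (by rw [e1.mp rfl, e2.mp heq.symm])
    | false =>
      rw [hb] at heq e1
      have h1 : H t = 1 := by
        rcases Nat.lt_or_ge (H t) 1 with hlt | hge
        · exact absurd (e1.mpr (by omega)) (by simp)
        · omega
      have h2 : H (t + 2) = 1 := by
        rcases Nat.lt_or_ge (H (t + 2)) 1 with hlt | hge
        · have := e2.mpr (by omega); rw [← heq] at this
          exact absurd this (by simp)
        · omega
      omega
  by_cases hd0 : H 0 ≠ H 1
  · have hd1 : ¬ H 1 ≠ H 2 := (G1 0 (by omega)).mp hd0
    have hd2 : H 2 ≠ H 3 := by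
      have := G1 1 (by omega); tauto
    exact key 0 (by omega) hd0 hd2 h02
  · have hd1 : H 1 ≠ H 2 := by have := G1 0 (by omega); tauto
    have odd : ∀ i, 2 * i + 2 ≤ 2 * (j + 2) → H (2 * i + 1) ≠ H (2 * i + 2) := by
      intro i
      induction i with
      | zero => intro _; exact hd1
      | succ i ih =>
        intro hle
        have h1 := ih (by omega)
        have h2 : ¬ H (2 * i + 2) ≠ H (2 * i + 3) := (G1 (2 * i + 1) (by omega)).mp h1
        have h3 := G1 (2 * i + 2) (by omega)
        have h4 : H (2 * i + 3) ≠ H (2 * i + 4) := by tauto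
        have e1 : 2 * (i + 1) + 1 = 2 * i + 3 := by ring
        have e2 : 2 * (i + 1) + 2 = 2 * i + 4 := by ring
        rw [e1, e2]; exact h4
    have hA : H (2 * j + 1) ≠ H (2 * j + 2) := odd j (by omega)
    have hB : H (2 * j + 3) ≠ H (2 * j + 4) := by
      have := odd (j + 1) (by omega)
      have e1 : 2 * (j + 1) + 1 = 2 * j + 3 := by ring
      have e2 : 2 * (j + 1) + 2 = 2 * j + 4 := by ring
      rw [e1, e2] at this; exact this
    have hkey := key (2 * j + 1) (by omega) hA hB
    have e1 : 2 * (j + 2) - 1 = 2 * j + 3 := by omega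
    have e2 : 2 * (j + 2) - 3 = 2 * j + 1 := by omega
    rw [e1, e2] at hend
    apply hkey
    rw [show 2 * j + 1 + 2 = 2 * j + 3 from by ring]
    exact hend.symm


/-- degree at most two -/
def Deg2 (E : V → V → Prop) : Prop :=
  ∀ x a b c, adjR E x a → adjR E x b → adjR E x c → a = b ∨ b = c ∨ a = c

/-- the bad-path existence statement -/
def BadEx (E : V → V → Prop) : Prop :=
  ∃ (k : ℕ) (σ : ℕ → Bool), 2 ≤ k ∧
    σ 0 = σ 2 ∧ σ (2 * k - 1) = σ (2 * k - 3) ∧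
    (∀ t, 1 ≤ t → t + 2 ≤ 2 * k - 2 → σ t ≠ σ (t + 2)) ∧
    IotHomEx (OPathRel (2 * k) σ) E

/-- orientation of the walk edges -/
noncomputable def tauF (E : V → V → Prop) (u : ℕ → V) (t : ℕ) : Bool :=
  if E (u t) (u (t + 1)) then true else false

lemma tau_of_fwd {E : V → V → Prop} {u : ℕ → V} {t : ℕ} (h : E (u t) (u (t + 1))) :
    tauF E u t = true := if_pos h

lemma tau_of_bwd {E : V → V → Prop} (hor : IsOriented E) (hirr : NoLoops E)
    {u : ℕ → V} {t : ℕ} (h : E (u (t + 1)) (u t)) : tauF E u t = false := by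
  apply if_neg
  intro hf
  have hne : u t ≠ u (t + 1) := adjR_ne hirr (Or.inl hf)
  exact hor _ _ hne ⟨hf, h⟩

lemma tau_fwd_of_true {E : V → V → Prop} (hor : IsOriented E) (hirr : NoLoops E)
    {u : ℕ → V} {t : ℕ} (hadj : adjR E (u t) (u (t + 1))) (h : tauF E u t = true) :
    E (u t) (u (t + 1)) := by
  cases hadj with
  | inl h' => exact h'
  | inr h' => rw [tau_of_bwd hor hirr h'] at h; exact absurd h (by simp)

lemma tau_bwd_of_false {E : V → V → Prop} {u : ℕ → V} {t : ℕ}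
    (hadj : adjR E (u t) (u (t + 1))) (h : tauF E u t = false) :
    E (u (t + 1)) (u t) := by
  cases hadj with
  | inl h' => rw [tau_of_fwd h'] at h; exact absurd h (by simp)
  | inr h' => exact h'

/-- extend a walk, or it is stuck, or it closes a cycle -/
lemma walk_step {E : V → V → Prop} (hor : IsOriented E) (hirr : NoLoops E) (hdeg : Deg2 E)
    {n : ℕ} {u : ℕ → V}
    (hadj : ∀ i, i < n → adjR E (u i) (u (i + 1)))
    (hinj : ∀ i j, i ≤ n → j ≤ n → u i = u j → i = j) :
    (∃ u' : ℕ → V, (∀ i, i ≤ n → u' i = u i) ∧ (∀ i, i < n + 1 → adjR E (u' i) (u' (i + 1))) ∧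
      (∀ i j, i ≤ n + 1 → j ≤ n + 1 → u' i = u' j → i = j)) ∨
    (∀ z, adjR E (u n) z → 1 ≤ n ∧ z = u (n - 1)) ∨
    (2 ≤ n ∧ adjR E (u n) (u 0)) := by
  by_cases hext : ∃ z, adjR E (u n) z ∧ (n = 0 ∨ z ≠ u (n - 1))
  · obtain ⟨z, hz, hz2⟩ := hext
    have hzn : z ≠ u n := fun h => adjR_ne hirr hz h.symm
    by_cases himg : ∃ j, j ≤ n ∧ u j = z
    · obtain ⟨j, hjn, hj⟩ := himg
      have hjne : j ≠ n := fun h => hzn (h ▸ hj.symm)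
      have hn1 : 1 ≤ n := by
        rcases Nat.eq_zero_or_pos n with h0 | h
        · omega
        · exact h
      have hzne : z ≠ u (n - 1) := by
        rcases hz2 with h0 | h
        · exact absurd h0 (by omega)
        · exact h
      have hjn1 : j ≠ n - 1 := fun h => hzne (h ▸ hj.symm)
      have hj0 : j = 0 := by
        by_contra hj0
        have hj1 : 1 ≤ j := by omega
        have hjlt : j + 1 < n := by omega
        have h1 : adjR E (u j) (u (j - 1)) := by
          have := hadj (j - 1) (by omega)
          rw [show j - 1 + 1 = j from by omega] at this
          exact adjR_symm this
        have h2 : adjR E (u j) (u (j + 1)) := hadj j (by omega)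
        have h3 : adjR E (u j) (u n) := by rw [hj]; exact adjR_symm hz
        rcases hdeg (u j) (u (j - 1)) (u (j + 1)) (u n) h1 h2 h3 with h | h | h
        · have := hinj (j - 1) (j + 1) (by omega) (by omega) h; omega
        · have := hinj (j + 1) n (by omega) (by omega) h; omega
        · have := hinj (j - 1) n (by omega) (by omega) h; omega
      have hn2 : 2 ≤ n := by
        rcases Nat.lt_or_ge n 2 with h | h
        · exfalso
          have : j = n - 1 := by omega
          exact hjn1 this
        · exact h
      right; right
      refine ⟨hn2, ?_⟩
      have h0 : u 0 = z := hj0 ▸ hj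
      rw [h0]; exact hz
    · left
      refine ⟨fun i => if i ≤ n then u i else z, fun i hi => if_pos hi, ?_, ?_⟩
      · intro i hi
        dsimp only
        rcases Nat.lt_or_ge i n with h | h
        · rw [if_pos (by omega : i ≤ n), if_pos (by omega : i + 1 ≤ n)]
          exact hadj i h
        · have hi' : i = n := by omega
          subst hi'
          rw [if_pos (le_refl _), if_neg (by omega : ¬ i + 1 ≤ i)]
          exact hz
      · intro i j hi hj heq
        dsimp only at heq
        rcases Nat.lt_or_ge i (n + 1) with h1 | h1 <;> rcases Nat.lt_or_ge j (n + 1) with h2 | h2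
        · rw [if_pos (by omega : i ≤ n), if_pos (by omega : j ≤ n)] at heq
          exact hinj i j (by omega) (by omega) heq
        · have : j = n + 1 := by omega
          subst this
          rw [if_pos (by omega : i ≤ n), if_neg (by omega : ¬ n + 1 ≤ n)] at heq
          exact absurd ⟨i, by omega, heq⟩ himg
        · have : i = n + 1 := by omega
          subst this
          rw [if_neg (by omega : ¬ n + 1 ≤ n), if_pos (by omega : j ≤ n)] at heq
          exact absurd ⟨j, by omega, heq.symm⟩ himg
        · omega
  · right; left
    intro z hz
    push_neg at hext
    obtain ⟨h2a, h2b⟩ := hext z hz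
    exact ⟨by omega, h2b⟩

/-- maximal walks exist -/
lemma max_walk [Fintype V] {E : V → V → Prop} (hor : IsOriented E) (hirr : NoLoops E)
    (hdeg : Deg2 E) (x0 : V) :
    ∃ (n : ℕ) (u : ℕ → V), u 0 = x0 ∧ (∀ i, i < n → adjR E (u i) (u (i + 1))) ∧
      (∀ i j, i ≤ n → j ≤ n → u i = u j → i = j) ∧
      ((∀ z, adjR E (u n) z → 1 ≤ n ∧ z = u (n - 1)) ∨ (2 ≤ n ∧ adjR E (u n) (u 0))) := by
  set P : ℕ → Prop := fun n => ∃ u : ℕ → V, u 0 = x0 ∧ (∀ i, i < n → adjR E (u i) (u (i + 1))) ∧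
      (∀ i j, i ≤ n → j ≤ n → u i = u j → i = j) with hP
  have hP0 : P 0 := ⟨fun _ => x0, rfl, fun i hi => absurd hi (by omega), fun i j hi hj _ => by omega⟩
  have hbound : ∀ n, P n → n < Fintype.card V := by
    rintro n ⟨u, -, -, hinj⟩
    have : Function.Injective (fun i : Fin (n + 1) => u i) := by
      intro i j hij
      exact Fin.ext (hinj i j (by omega) (by omega) hij)
    have := Fintype.card_le_of_injective _ this
    simp at this; omega
  have hmax : ∃ n, P n ∧ ¬ P (n + 1) := by
    by_contra hc
    push_neg at hc
    have hall : ∀ n, P n := by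
      intro n
      induction n with
      | zero => exact hP0
      | succ n ih => exact hc n ih
    exact absurd (hbound _ (hall (Fintype.card V))) (by omega)
  obtain ⟨n, ⟨u, hu0, hadj, hinj⟩, hnot⟩ := hmax
  rcases walk_step hor hirr hdeg hadj hinj with ⟨u', he, ha', hi'⟩ | h | h
  · exact absurd ⟨u', by rw [he 0 (by omega)]; exact hu0, ha', hi'⟩ hnot
  · exact ⟨n, u, hu0, hadj, hinj, Or.inl h⟩
  · exact ⟨n, u, hu0, hadj, hinj, Or.inr h⟩

/-- coverage of a component by a closed set -/
lemma cover {E : V → V → Prop} {S : Set V} (hcl : ∀ y z, y ∈ S → adjR E y z → z ∈ S)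
    {e : V} (he : e ∈ S) : ∀ y, UConn E e y → y ∈ S := by
  intro y h
  induction h with
  | refl => exact he
  | tail hb hstep ih => exact hcl _ _ ih hstep

lemma uconn_symm {E : V → V → Prop} {x y : V} (h : UConn E x y) : UConn E y x :=
  by
    induction h with
    | refl => exact Relation.ReflTransGen.refl
    | tail _ hab ih => exact Relation.ReflTransGen.head (Or.symm hab) ih

lemma uconn_adj {E : V → V → Prop} {x y : V} (h : adjR E x y) : UConn E x y :=
  Relation.ReflTransGen.single h

lemma mod_add_two_ne {m a : ℕ} (hm : 3 ≤ m) : a % m ≠ (a + 2) % m := by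
  intro h
  have h2 : (a + 2) % m = (a % m + 2) % m := by
    conv_lhs => rw [Nat.add_mod]
    congr 1
    rw [Nat.mod_eq_of_lt (by omega : 2 < m)]
  rw [h2] at h
  have hlt : a % m < m := Nat.mod_lt _ (by omega)
  rcases Nat.lt_or_ge (a % m + 2) m with hl | hg
  · rw [Nat.mod_eq_of_lt hl] at h; omega
  · have hx : a % m + 2 - m < m := by omega
    rw [Nat.mod_eq_sub_mod hg, Nat.mod_eq_of_lt hx] at h
    omega

/-- produce the bad path from a walk with two consecutive odd-distance failures -/
lemma bad_of_walk {E : V → V → Prop} (hor : IsOriented E) (hirr : NoLoops E)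
    {u : ℕ → V} {c d : ℕ}
    (hadj : ∀ jj, jj ≤ d + 2 → adjR E (u (c + jj)) (u (c + jj + 1)))
    (hne2 : ∀ jj, jj + 2 ≤ d + 3 → u (c + jj) ≠ u (c + jj + 2))
    (hd1 : 0 < d) (hdodd : d % 2 = 1)
    (hf0 : tauF E u c = tauF E u (c + 2))
    (hf1 : tauF E u (c + d) = tauF E u (c + d + 2))
    (hmid : ∀ s, 0 < s → s < d → tauF E u (c + s) ≠ tauF E u (c + s + 2)) :
    BadEx E := by
  refine ⟨(d + 3) / 2, fun t => tauF E u (c + t), by omega, ?_, ?_, ?_, ?_⟩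
  · simpa using hf0
  · have e1 : 2 * ((d + 3) / 2) - 1 = d + 2 := by omega
    have e2 : 2 * ((d + 3) / 2) - 3 = d := by omega
    rw [e1, e2]
    show tauF E u (c + (d + 2)) = tauF E u (c + d)
    rw [show c + (d + 2) = c + d + 2 from by omega]
    exact hf1.symm
  · intro t ht1 ht2
    have htd : t < d := by omega
    have hm := hmid t (by omega) htd
    show tauF E u (c + t) ≠ tauF E u (c + (t + 2))
    rw [show c + (t + 2) = c + t + 2 from by omega]
    exact hm
  · have h2k : 2 * ((d + 3) / 2) = d + 3 := by omega
    refine ⟨fun x => u (c + (x : ℕ)), ?_, ?_⟩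
    · rintro x y ⟨t, ht, hcase⟩
      rw [h2k] at ht
      rcases hcase with ⟨hb, hx, hy⟩ | ⟨hb, hx, hy⟩
      · dsimp only at hb ⊢
        rw [hx, hy, show c + (t + 1) = c + t + 1 from by omega]
        exact tau_fwd_of_true hor hirr (hadj t (by omega)) hb
      · dsimp only at hb ⊢
        rw [hx, hy, show c + (t + 1) = c + t + 1 from by omega]
        exact tau_bwd_of_false (hadj t (by omega)) hb
    · intro x
      have hstep : ∀ w x' : Fin (2 * ((d + 3) / 2) + 1), OPathRel (2 * ((d + 3) / 2)) (fun t => tauF E u (c + t)) w x' →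
          (w : ℕ) + 1 = (x' : ℕ) ∨ (x' : ℕ) + 1 = (w : ℕ) := by
        rintro w x' ⟨t, ht, hcase⟩
        rcases hcase with ⟨_, hw, hx'⟩ | ⟨_, hw, hx'⟩
        · left; omega
        · right; omega
      intro y hy z hz heq
      have hy' : (y : ℕ) + 1 = (x : ℕ) ∨ (x : ℕ) + 1 = (y : ℕ) := by
        rcases hy with hy | hy
        · exact hstep y x hy
        · rcases hstep x y hy with h | h
          · right; exact h
          · left; exact h
      have hz' : (z : ℕ) + 1 = (x : ℕ) ∨ (x : ℕ) + 1 = (z : ℕ) := by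
        rcases hz with hz | hz
        · exact hstep z x hz
        · rcases hstep x z hz with h | h
          · right; exact h
          · left; exact h
      have hzb : (z : ℕ) ≤ 2 * ((d + 3) / 2) := by omega
      have hyb : (y : ℕ) ≤ 2 * ((d + 3) / 2) := by omega
      have key : ∀ y' z' : Fin (2 * ((d + 3) / 2) + 1), (y' : ℕ) + 1 = (x : ℕ) →
          (x : ℕ) + 1 = (z' : ℕ) → u (c + (y' : ℕ)) ≠ u (c + (z' : ℕ)) := by
        intro y' z' h1 h2
        have hb : (z' : ℕ) ≤ 2 * ((d + 3) / 2) := by omega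
        have := hne2 (y' : ℕ) (by omega)
        rw [show c + (y' : ℕ) + 2 = c + (z' : ℕ) from by omega] at this
        exact this
      rcases hy' with h1 | h1 <;> rcases hz' with h2 | h2
      · exact Fin.ext (by omega)
      · exact absurd heq (key y z h1 h2)
      · exact absurd heq.symm (key z y h2 h1)
      · exact Fin.ext (by omega)


lemma path_color {E : V → V → Prop} (hor : IsOriented E) (hirr : NoLoops E)
    {n : ℕ} {u : ℕ → V}
    (hadj : ∀ i, i < n → adjR E (u i) (u (i + 1)))
    (hinj : ∀ i j, i ≤ n → j ≤ n → u i = u j → i = j)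
    (hclos : ∀ i, i ≤ n → ∀ z, adjR E (u i) z → (1 ≤ i ∧ z = u (i - 1)) ∨ (i < n ∧ z = u (i + 1)))
    (hnb : ¬ BadEx E) :
    ∃ f : V → Fin 2, (∀ i z, i ≤ n → E (u i) z → f (u i) ≤ f z) ∧
      (∀ i a b, i ≤ n → adjR E (u i) a → adjR E (u i) b → a ≠ b → f a ≠ f b) := by
  set Fail : ℕ → Prop := fun t => t + 3 ≤ n ∧ tauF E u t = tauF E u (t + 2) with hFail
  by_cases hA : ∃ p q, Fail p ∧ Fail q ∧ (p + q) % 2 = 1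
  · exfalso; apply hnb
    obtain ⟨p, q, hp, hq, hpq⟩ := hA
    have hmain : ∀ p q, Fail p → Fail q → p < q → (q - p) % 2 = 1 → BadEx E := by
      intro p q hp hq hlt hodd
      obtain ⟨c, d, hpc, hcq, hd0, hdodd, hc, hcd, hbetween⟩ :=
        consec_odd (q - p) p q rfl hp hq hlt hodd
      have hr1 := hcd.1
      apply bad_of_walk hor hirr (c := c) (d := d)
      · intro jj hjj
        exact hadj _ (by omega)
      · intro jj hjj heq
        have := hinj (c + jj) (c + jj + 2) (by omega) (by omega) heq
        omega
      · exact hd0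
      · exact hdodd
      · exact hc.2
      · exact hcd.2
      · intro s hs1 hs2 heq
        exact hbetween s hs1 hs2 ⟨by omega, heq⟩
    rcases Nat.lt_trichotomy p q with h | h | h
    · exact hmain p q hp hq h (by omega)
    · subst h; omega
    · exact hmain q p hq hp h (by omega)
  · push_neg at hA
    have hcc : ∃ c0, c0 ≤ 1 ∧ ∀ t, t % 2 = c0 % 2 → ¬ Fail t := by
      by_cases hF : ∃ t, Fail t
      · obtain ⟨f0, hf0⟩ := hF
        refine ⟨1 - f0 % 2, by omega, ?_⟩
        intro t ht hFt
        have := hA t f0 hFt hf0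
        omega
      · push_neg at hF
        exact ⟨0, by omega, fun t _ => hF t⟩
    obtain ⟨c0, hc01, hclean⟩ := hcc
    set off := 1 - c0 with hoff
    set a := ! tauF E u c0 with ha
    have halign : ∀ t, t % 2 = c0 % 2 → t + 1 ≤ n → pat off a t = ! tauF E u t := by
      have key : ∀ jq, c0 + 2 * jq + 1 ≤ n →
          pat off a (c0 + 2 * jq) = ! tauF E u (c0 + 2 * jq) := by
        intro jq
        induction jq with
        | zero =>
          intro _
          rw [show c0 + 2 * 0 = c0 from by omega]
          have h1 : (c0 + off) % 4 = 1 := by omega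
          show xor a (decide (2 ≤ (c0 + off) % 4)) = ! tauF E u c0
          rw [h1]
          simp [ha]
        | succ jq ih =>
          intro hle
          have hprev := ih (by omega)
          have hnf : ¬ Fail (c0 + 2 * jq) := hclean _ (by omega)
          have htne : tauF E u (c0 + 2 * jq) ≠ tauF E u (c0 + 2 * jq + 2) := by
            intro heq
            exact hnf ⟨by omega, heq⟩
          have htau : tauF E u (c0 + 2 * jq + 2) = ! tauF E u (c0 + 2 * jq) := by
            revert htne
            cases tauF E u (c0 + 2 * jq) <;> cases tauF E u (c0 + 2 * jq + 2) <;> simp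
          have hpat : pat off a (c0 + 2 * jq + 2) = ! pat off a (c0 + 2 * jq) :=
            pat_add_two _ _ _
          rw [show c0 + 2 * (jq + 1) = c0 + 2 * jq + 2 from by omega, hpat, htau, hprev]
      intro t ht hle
      obtain ⟨jq, rfl⟩ : ∃ jq, t = c0 + 2 * jq := ⟨(t - c0) / 2, by omega⟩
      exact key jq hle
    have hdiffc : ∀ t, pat off a t ≠ pat off a (t + 1) → t % 2 = c0 % 2 := by
      intro t h
      have := (pat_diff_iff off a t).mp h
      omega
    set f : V → Fin 2 :=
      fun v => if h : ∃ i, i ≤ n ∧ u i = v then bcol (pat off a (Classical.choose h)) else 0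
      with hfdef
    have hfval : ∀ i, i ≤ n → f (u i) = bcol (pat off a i) := by
      intro i hi
      have hex : ∃ j, j ≤ n ∧ u j = u i := ⟨i, hi, rfl⟩
      simp only [hfdef]
      rw [dif_pos hex]
      obtain ⟨h1, h2⟩ := Classical.choose_spec hex
      rw [hinj _ _ h1 hi h2]
    refine ⟨f, ?_, ?_⟩
    · intro i z hi hE
      rcases hclos i hi z (Or.inl hE) with ⟨hi1, rfl⟩ | ⟨hi2, rfl⟩
      · have htf : tauF E u (i - 1) = false := by
          apply tau_of_bwd hor hirr
          rw [show i - 1 + 1 = i from by omega]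
          exact hE
        rw [hfval i hi, hfval (i - 1) (by omega)]
        apply bcol_le
        by_cases hpa : pat off a (i - 1) = true
        · exact Or.inr hpa
        · have hpa' : pat off a (i - 1) = false := by
            revert hpa; cases pat off a (i - 1) <;> simp
          left
          by_cases hdiff : pat off a (i - 1) = pat off a (i - 1 + 1)
          · rw [show i = i - 1 + 1 from by omega, ← hdiff]; exact hpa'
          · exfalso
            have hcls := hdiffc (i - 1) hdiff
            have hal := halign (i - 1) hcls (by omega)
            rw [htf, hpa'] at hal
            exact absurd hal (by simp)
      · have htf : tauF E u i = true := tau_of_fwd hE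
        rw [hfval i hi, hfval (i + 1) (by omega)]
        apply bcol_le
        by_cases hpa : pat off a i = false
        · exact Or.inl hpa
        · have hpa' : pat off a i = true := by
            revert hpa; cases pat off a i <;> simp
          right
          by_cases hdiff : pat off a i = pat off a (i + 1)
          · rw [← hdiff]; exact hpa'
          · exfalso
            have hcls := hdiffc i hdiff
            have hal := halign i hcls (by omega)
            rw [htf, hpa'] at hal
            exact absurd hal (by simp)
    · intro i aa bb hi haa hbb hne
      have hkey : ∀ x y : V, x = u (i - 1) → y = u (i + 1) → 1 ≤ i → i < n → f x ≠ f y := by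
        rintro x y rfl rfl h1 h2 heq
        rw [hfval (i - 1) (by omega), hfval (i + 1) (by omega)] at heq
        have hbe := bcol_inj heq
        have h3 : pat off a (i - 1 + 2) = ! pat off a (i - 1) := pat_add_two _ _ _
        rw [show i - 1 + 2 = i + 1 from by omega] at h3
        rw [h3] at hbe
        exact absurd hbe (by cases pat off a (i - 1) <;> simp)
      rcases hclos i hi aa haa with ⟨hi1, rfl⟩ | ⟨hi2, rfl⟩ <;>
        rcases hclos i hi bb hbb with ⟨hj1, rfl⟩ | ⟨hj2, rfl⟩
      · exact absurd rfl hne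
      · exact hkey _ _ rfl rfl hi1 hj2
      · exact fun heq => hkey _ _ rfl rfl hj1 hi2 heq.symm
      · exact absurd rfl hne


lemma cyc_color {E : V → V → Prop} (hor : IsOriented E) (hirr : NoLoops E)
    {m : ℕ} {u : ℕ → V} (hm : 3 ≤ m)
    (hadj : ∀ i, adjR E (u i) (u (i + 1)))
    (hper : ∀ i, u (i + m) = u i)
    (hinjm : ∀ i j, i < m → j < m → u i = u j → i = j)
    (hclos : ∀ i z, adjR E (u i) z → z = u (i + 1) ∨ z = u (i + m - 1))
    (hnb : ¬ BadEx E) :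
    ∃ f : V → Fin 2, (∀ i z, E (u i) z → f (u i) ≤ f z) ∧
      (∀ i a b, adjR E (u i) a → adjR E (u i) b → a ≠ b → f a ≠ f b) := by
  have hperq : ∀ q i, u (i + m * q) = u i := by
    intro q
    induction q with
    | zero => intro i; simp
    | succ q ih =>
      intro i
      rw [show i + m * (q + 1) = (i + m * q) + m from by ring, hper, ih]
  have humod : ∀ i, u i = u (i % m) := by
    intro i
    conv_lhs => rw [show i = i % m + m * (i / m) from (Nat.mod_add_div i m).symm]
    exact hperq (i / m) (i % m)
  have hueq : ∀ i j, u i = u j ↔ i % m = j % m := by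
    intro i j
    constructor
    · intro h
      apply hinjm _ _ (Nat.mod_lt _ (by omega)) (Nat.mod_lt _ (by omega))
      rw [← humod i, ← humod j]; exact h
    · intro h; rw [humod i, humod j, h]
  have htper : ∀ t, tauF E u (t + m) = tauF E u t := by
    intro t
    unfold tauF
    rw [show t + m + 1 = (t + 1) + m from by ring, hper, hper]
  set Fail : ℕ → Prop := fun t => tauF E u t = tauF E u (t + 2) with hFail
  by_cases hA : ∃ p q, Fail p ∧ Fail q ∧ (p + q) % 2 = 1
  · exfalso; apply hnb
    obtain ⟨p, q, hp, hq, hpq⟩ := hA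
    have hmain : ∀ p q, Fail p → Fail q → p < q → (q - p) % 2 = 1 → BadEx E := by
      intro p q hp hq hlt hodd
      obtain ⟨c, d, hpc, hcq, hd0, hdodd, hc, hcd, hbetween⟩ :=
        consec_odd (q - p) p q rfl hp hq hlt hodd
      apply bad_of_walk hor hirr (c := c) (d := d)
      · intro jj _; exact hadj _
      · intro jj _ heq
        exact mod_add_two_ne hm ((hueq _ _).mp heq)
      · exact hd0
      · exact hdodd
      · exact hc
      · exact hcd
      · intro s hs1 hs2 heq
        exact hbetween s hs1 hs2 heq
    rcases Nat.lt_trichotomy p q with h | h | h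
    · exact hmain p q hp hq h (by omega)
    · subst h; omega
    · exact hmain q p hq hp h (by omega)
  · push_neg at hA
    have hcc : ∃ c0, c0 ≤ 1 ∧ ∀ t, t % 2 = c0 % 2 → ¬ Fail t := by
      by_cases hF : ∃ t, Fail t
      · obtain ⟨f0, hf0⟩ := hF
        refine ⟨1 - f0 % 2, by omega, ?_⟩
        intro t ht hFt
        have := hA t f0 hFt hf0
        omega
      · push_neg at hF
        exact ⟨0, by omega, fun t _ => hF t⟩
    obtain ⟨c0, hc01, hclean⟩ := hcc
    have halt : ∀ t, t % 2 = c0 % 2 → tauF E u (t + 2) = ! tauF E u t := by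
      intro t ht
      have hnf : tauF E u t ≠ tauF E u (t + 2) := fun heq => hclean t ht heq
      revert hnf
      cases tauF E u t <;> cases tauF E u (t + 2) <;> simp
    have hpow : ∀ t, t % 2 = c0 % 2 → ∀ s,
        tauF E u (t + 2 * s) = (if s % 2 = 0 then tauF E u t else ! tauF E u t) := by
      intro t ht s
      induction s with
      | zero => simp
      | succ s ih =>
        have h1 : tauF E u (t + 2 * (s + 1)) = ! tauF E u (t + 2 * s) := by
          rw [show t + 2 * (s + 1) = (t + 2 * s) + 2 from by ring]
          exact halt (t + 2 * s) (by omega)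
        rw [h1, ih]
        by_cases h : s % 2 = 0
        · rw [if_pos h, if_neg (by omega)]
        · rw [if_neg h, if_pos (by omega), Bool.not_not]
    have hmeven : m % 2 = 0 := by
      by_cases hF : ∃ t, Fail t
      · obtain ⟨f0, hf0⟩ := hF
        have hf0m : Fail (f0 + m) := by
          show tauF E u (f0 + m) = tauF E u (f0 + m + 2)
          rw [htper f0, show f0 + m + 2 = (f0 + 2) + m from by ring, htper (f0 + 2)]
          exact hf0
        have := hA f0 (f0 + m) hf0 hf0m
        omega
      · have h1 : tauF E u (c0 + 2 * m) = tauF E u c0 := by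
          rw [show c0 + 2 * m = (c0 + m) + m from by ring, htper, htper]
        have h2 := hpow c0 rfl m
        by_contra hodd
        rw [if_neg (by omega), h1] at h2
        exact absurd h2 (by cases tauF E u c0 <;> simp)
    have hm4 : m % 4 = 0 := by
      have h1 : tauF E u (c0 + 2 * (m / 2)) = tauF E u c0 := by
        rw [show c0 + 2 * (m / 2) = c0 + m from by omega, htper]
      have h2 := hpow c0 rfl (m / 2)
      by_contra h4
      rw [if_neg (by omega), h1] at h2
      exact absurd h2 (by cases tauF E u c0 <;> simp)
    set off := 1 - c0 with hoff
    set a := ! tauF E u c0 with ha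
    have halign : ∀ t, t % 2 = c0 % 2 → pat off a t = ! tauF E u t := by
      have key : ∀ jq, pat off a (c0 + 2 * jq) = ! tauF E u (c0 + 2 * jq) := by
        intro jq
        induction jq with
        | zero =>
          rw [show c0 + 2 * 0 = c0 from by omega]
          have h1 : (c0 + off) % 4 = 1 := by omega
          show xor a (decide (2 ≤ (c0 + off) % 4)) = ! tauF E u c0
          rw [h1]
          simp [ha]
        | succ jq ih =>
          have htau : tauF E u (c0 + 2 * jq + 2) = ! tauF E u (c0 + 2 * jq) :=
            halt _ (by omega)
          have hpat : pat off a (c0 + 2 * jq + 2) = ! pat off a (c0 + 2 * jq) :=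
            pat_add_two _ _ _
          rw [show c0 + 2 * (jq + 1) = c0 + 2 * jq + 2 from by omega, hpat, htau, ih]
      intro t ht
      obtain ⟨jq, rfl⟩ : ∃ jq, t = c0 + 2 * jq := ⟨(t - c0) / 2, by omega⟩
      exact key jq
    have hdiffc : ∀ t, pat off a t ≠ pat off a (t + 1) → t % 2 = c0 % 2 := by
      intro t h
      have := (pat_diff_iff off a t).mp h
      omega
    have hpatm : ∀ i, pat off a (i + m) = pat off a i := by
      intro i
      have h0 := pat_add_mul_four off a i (m / 4)
      rw [show i + 4 * (m / 4) = i + m from by omega] at h0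
      exact h0
    have hpatmod : ∀ i, pat off a (i % m) = pat off a i := by
      intro i
      obtain ⟨mq, hmq⟩ : ∃ mq, m = 4 * mq := ⟨m / 4, by omega⟩
      have h2 := pat_add_mul_four off a (i % m) (mq * (i / m))
      rw [show 4 * (mq * (i / m)) = m * (i / m) from by rw [hmq]; ring] at h2
      rw [Nat.mod_add_div i m] at h2
      exact h2.symm
    set f : V → Fin 2 :=
      fun v => if h : ∃ i, i < m ∧ u i = v then bcol (pat off a (Classical.choose h)) else 0
      with hfdef
    have hfval : ∀ i, f (u i) = bcol (pat off a i) := by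
      intro i
      have hex : ∃ j, j < m ∧ u j = u i := ⟨i % m, Nat.mod_lt _ (by omega), (humod i).symm⟩
      simp only [hfdef]
      rw [dif_pos hex]
      obtain ⟨h1, h2⟩ := Classical.choose_spec hex
      have h3 : Classical.choose hex = i % m := by
        have := (hueq _ _).mp h2
        rw [Nat.mod_eq_of_lt h1] at this
        exact this
      rw [h3, hpatmod]
    refine ⟨f, ?_, ?_⟩
    · intro i z hE
      rcases hclos i z (Or.inl hE) with rfl | rfl
      · have htf : tauF E u i = true := tau_of_fwd hE
        rw [hfval i, hfval (i + 1)]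
        apply bcol_le
        by_cases hpa : pat off a i = false
        · exact Or.inl hpa
        · have hpa' : pat off a i = true := by
            revert hpa; cases pat off a i <;> simp
          right
          by_cases hdiff : pat off a i = pat off a (i + 1)
          · rw [← hdiff]; exact hpa'
          · exfalso
            have hal := halign i (hdiffc i hdiff)
            rw [htf, hpa'] at hal
            exact absurd hal (by simp)
      · have he1 : u (i + m - 1 + 1) = u i := by
          rw [show i + m - 1 + 1 = i + m from by omega, hper]
        have htf : tauF E u (i + m - 1) = false := by
          apply tau_of_bwd hor hirr
          rw [he1]
          exact hE
        have he2 : pat off a (i + m - 1 + 1) = pat off a i := by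
          rw [show i + m - 1 + 1 = i + m from by omega, hpatm]
        rw [hfval i, hfval (i + m - 1)]
        apply bcol_le
        by_cases hpa : pat off a (i + m - 1) = true
        · exact Or.inr hpa
        · have hpa' : pat off a (i + m - 1) = false := by
            revert hpa; cases pat off a (i + m - 1) <;> simp
          left
          by_cases hdiff : pat off a (i + m - 1) = pat off a (i + m - 1 + 1)
          · rw [← he2, ← hdiff]; exact hpa'
          · exfalso
            have hal := halign (i + m - 1) (hdiffc _ hdiff)
            rw [htf, hpa'] at hal
            exact absurd hal (by simp)
    · intro i aa bb haa hbb hne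
      have hkey : ∀ x y : V, x = u (i + 1) → y = u (i + m - 1) → f x ≠ f y := by
        rintro x y rfl rfl heq
        rw [hfval (i + 1), hfval (i + m - 1)] at heq
        have hbe := bcol_inj heq
        have h3 : pat off a (i + m - 1 + 2) = ! pat off a (i + m - 1) := pat_add_two _ _ _
        have h4 : pat off a (i + m - 1 + 2) = pat off a (i + 1) := by
          rw [show i + m - 1 + 2 = (i + 1) + m from by omega, hpatm]
        rw [h4] at h3
        rw [h3] at hbe
        exact absurd hbe (by cases pat off a (i + m - 1) <;> simp)
      rcases hclos i aa haa with rfl | rfl <;> rcases hclos i bb hbb with rfl | rfl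
      · exact absurd rfl hne
      · exact hkey _ _ rfl rfl
      · exact fun heq => hkey _ _ rfl rfl heq.symm
      · exact absurd rfl hne


lemma comp_color [Fintype V] {E : V → V → Prop} (hor : IsOriented E) (hirr : NoLoops E)
    (hdeg : Deg2 E) (hnb : ¬ BadEx E) (x0 : V) :
    ∃ f : V → Fin 2, (∀ y z, UConn E x0 y → E y z → f y ≤ f z) ∧
      (∀ y a b, UConn E x0 y → adjR E y a → adjR E y b → a ≠ b → f a ≠ f b) := by
  obtain ⟨n, u, hu0, hadj, hinj, hend⟩ := max_walk hor hirr hdeg x0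
  have huconn : ∀ i, i ≤ n → UConn E x0 (u i) := by
    intro i
    induction i with
    | zero => intro _; rw [hu0]; exact Relation.ReflTransGen.refl
    | succ i ih =>
      intro hle
      exact Relation.ReflTransGen.tail (ih (by omega)) (hadj i (by omega))
  rcases hend with hstuck | ⟨hn2, hcyc⟩
  · obtain ⟨n', v, hv0, hadj', hinj', hend'⟩ := max_walk hor hirr hdeg (u n)
    have hvstuck : ∀ z, adjR E (v n') z → 1 ≤ n' ∧ z = v (n' - 1) := by
      rcases hend' with h | ⟨hn2', hcyc'⟩
      · exact h
      · exfalso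
        have h1 : adjR E (v 0) (v n') := adjR_symm hcyc'
        rw [hv0] at h1
        have h2 := (hstuck _ h1).2
        have h3 : adjR E (v 0) (v 1) := hadj' 0 (by omega)
        rw [hv0] at h3
        have h4 := (hstuck _ h3).2
        have := hinj' n' 1 (le_refl _) (by omega) (h2.trans h4.symm)
        omega
    have hclos : ∀ i, i ≤ n' → ∀ z, adjR E (v i) z →
        (1 ≤ i ∧ z = v (i - 1)) ∨ (i < n' ∧ z = v (i + 1)) := by
      intro i hi z hz
      rcases Nat.eq_or_lt_of_le hi with heq | hlt
      · subst heq
        obtain ⟨h1, h2⟩ := hvstuck z hz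
        exact Or.inl ⟨h1, h2⟩
      · rcases Nat.eq_zero_or_pos i with rfl | hipos
        · right
          refine ⟨by omega, ?_⟩
          rw [hv0] at hz
          have h2 := (hstuck _ hz).2
          have h3 : adjR E (v 0) (v 1) := hadj' 0 (by omega)
          rw [hv0] at h3
          have h4 := (hstuck _ h3).2
          rw [h2, ← h4]
        · have h1 : adjR E (v i) (v (i - 1)) := by
            have := hadj' (i - 1) (by omega)
            rw [show i - 1 + 1 = i from by omega] at this
            exact adjR_symm this
          have h2 : adjR E (v i) (v (i + 1)) := hadj' i hlt
          rcases hdeg (v i) z (v (i - 1)) (v (i + 1)) hz h1 h2 with h | h | h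
          · exact Or.inl ⟨hipos, h⟩
          · exfalso
            have := hinj' (i - 1) (i + 1) (by omega) (by omega) h
            omega
          · exact Or.inr ⟨hlt, h⟩
    obtain ⟨f, hf1, hf2⟩ := path_color hor hirr hadj' hinj' hclos hnb
    have hcov : ∀ y, UConn E x0 y → ∃ i, i ≤ n' ∧ v i = y := by
      have hclosed : ∀ y z, (∃ i, i ≤ n' ∧ v i = y) → adjR E y z →
          ∃ i, i ≤ n' ∧ v i = z := by
        rintro y z ⟨i, hi, rfl⟩ hyz
        rcases hclos i hi z hyz with ⟨h1, rfl⟩ | ⟨h1, rfl⟩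
        · exact ⟨i - 1, by omega, rfl⟩
        · exact ⟨i + 1, by omega, rfl⟩
      intro y hy
      have hconn : UConn E (v 0) y := by
        rw [hv0]
        exact Relation.ReflTransGen.trans (uconn_symm (huconn n (le_refl _))) hy
      exact cover hclosed ⟨0, by omega, rfl⟩ y hconn
    refine ⟨f, ?_, ?_⟩
    · intro y z hy hE
      obtain ⟨i, hi, rfl⟩ := hcov y hy
      exact hf1 i z hi hE
    · intro y aa bb hy h1 h2 hne
      obtain ⟨i, hi, rfl⟩ := hcov y hy
      exact hf2 i aa bb hi h1 h2 hne
  · set m := n + 1 with hmdef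
    have hm3 : 3 ≤ m := by omega
    set w : ℕ → V := fun i => u (i % m) with hw
    have hwlt : ∀ i, i < m → w i = u i := by
      intro i hi
      simp only [hw]
      rw [Nat.mod_eq_of_lt hi]
    have hsucc : ∀ i, (i + 1) % m = (i % m + 1) % m := by
      intro i
      conv_lhs => rw [Nat.add_mod]
      rw [Nat.mod_eq_of_lt (show (1 : ℕ) < m from by omega)]
    have hwadj : ∀ i, adjR E (w i) (w (i + 1)) := by
      intro i
      have hr : i % m < m := Nat.mod_lt _ (by omega)
      show adjR E (u (i % m)) (u ((i + 1) % m))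
      by_cases h : i % m < n
      · rw [hsucc i, Nat.mod_eq_of_lt (show i % m + 1 < m from by omega)]
        exact hadj _ h
      · have h2 : i % m = n := by omega
        rw [hsucc i, h2, show n + 1 = m from hmdef.symm, Nat.mod_self]
        exact hcyc
    have hwper : ∀ i, w (i + m) = w i := by
      intro i
      show u ((i + m) % m) = u (i % m)
      rw [Nat.add_mod_right]
    have hwinj : ∀ i j, i < m → j < m → w i = w j → i = j := by
      intro i j hi hj heq
      rw [hwlt i hi, hwlt j hj] at heq
      exact hinj i j (by omega) (by omega) heq
    have hweq : ∀ i j, w i = w j → i % m = j % m := by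
      intro i j heq
      have h1 : i % m < m := Nat.mod_lt _ (by omega)
      have h2 : j % m < m := Nat.mod_lt _ (by omega)
      have heq' : u (i % m) = u (j % m) := heq
      exact hinj _ _ (by omega) (by omega) heq'
    have hwclos : ∀ i z, adjR E (w i) z → z = w (i + 1) ∨ z = w (i + m - 1) := by
      intro i z hz
      have h2 : adjR E (w i) (w (i + m - 1)) := by
        have h3 := hwadj (i + m - 1)
        rw [show i + m - 1 + 1 = i + m from by omega, hwper] at h3
        exact adjR_symm h3
      have hne12 : w (i + 1) ≠ w (i + m - 1) := by
        intro heq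
        have h4 := hweq _ _ heq
        have h5 : (i + m - 1 + 2) % m = (i + 1) % m := by
          rw [show i + m - 1 + 2 = (i + 1) + m from by omega, Nat.add_mod_right]
        exact mod_add_two_ne hm3 (a := i + m - 1) (by rw [h5, ← h4])
      rcases hdeg (w i) z (w (i + 1)) (w (i + m - 1)) hz (hwadj i) h2 with h | h | h
      · exact Or.inl h
      · exact absurd h hne12
      · exact Or.inr h
    obtain ⟨f, hf1, hf2⟩ := cyc_color hor hirr hm3 hwadj hwper hwinj hwclos hnb
    have hcov : ∀ y, UConn E x0 y → ∃ i, w i = y := by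
      have hclosed : ∀ y z, (∃ i, w i = y) → adjR E y z → ∃ i, w i = z := by
        rintro y z ⟨i, rfl⟩ hyz
        rcases hwclos i z hyz with rfl | rfl
        · exact ⟨i + 1, rfl⟩
        · exact ⟨i + m - 1, rfl⟩
      intro y hy
      have hw0 : w 0 = x0 := by
        rw [hwlt 0 (by omega)]
        exact hu0
      have hconn : UConn E (w 0) y := by
        rw [hw0]
        exact hy
      exact cover hclosed ⟨0, rfl⟩ y hconn
    refine ⟨f, ?_, ?_⟩
    · intro y z hy hE
      obtain ⟨i, rfl⟩ := hcov y hy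
      exact hf1 i z hE
    · intro y aa bb hy h1 h2 hne
      obtain ⟨i, rfl⟩ := hcov y hy
      exact hf2 i aa bb h1 h2 hne


lemma iot_comp {A B C : Type} {R : A → A → Prop} {S : B → B → Prop} {T : C → C → Prop}
    {g : A → B} {f : B → C} (hg : IsHom R S g) (hgi : IotInj R g)
    (hf : IsHom S T f) (hfi : IotInj S f) :
    IsHom R T (f ∘ g) ∧ IotInj R (f ∘ g) := by
  constructor
  · intro x y h; exact hf _ _ (hg _ _ h)
  · intro x y hy z hz heq
    have hmy : g y ∈ ({b | S b (g x)} ∪ {b | S (g x) b}) := by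
      rcases hy with hy | hy
      · exact Or.inl (hg _ _ hy)
      · exact Or.inr (hg _ _ hy)
    have hmz : g z ∈ ({b | S b (g x)} ∪ {b | S (g x) b}) := by
      rcases hz with hz | hz
      · exact Or.inl (hg _ _ hz)
      · exact Or.inr (hg _ _ hz)
    exact hgi x hy hz (hfi (g x) hmy hmz heq)

lemma no_star_to_T2r {ε : Fin 3 → Bool} (h : Option (Fin 3) → Fin 2)
    (hhom : IsHom (starRel ε) T2r h) (hinj : IotInj (starRel ε) h) : False := by
  have hmem : ∀ i : Fin 3,
      (some i) ∈ ({z | starRel ε z none} ∪ {z | starRel ε none z}) := by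
    intro i
    cases hb : ε i with
    | true => exact Or.inr ⟨i, Or.inl ⟨hb, rfl, rfl⟩⟩
    | false => exact Or.inl ⟨i, Or.inr ⟨hb, rfl, rfl⟩⟩
  have hI := hinj none
  have hvals : ∀ i j : Fin 3, h (some i) = h (some j) → i = j := by
    intro i j heq
    have := hI (hmem i) (hmem j) heq
    exact Option.some_injective _ this
  have hlt : ∀ o, ((h o) : ℕ) < 2 := fun o => (h o).isLt
  have htwo : ((h (some 0)) : ℕ) = ((h (some 1)) : ℕ) ∨
      ((h (some 0)) : ℕ) = ((h (some 2)) : ℕ) ∨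
      ((h (some 1)) : ℕ) = ((h (some 2)) : ℕ) := by
    have := hlt (some 0); have := hlt (some 1); have := hlt (some 2); omega
  rcases htwo with h' | h' | h'
  · exact absurd (hvals 0 1 (Fin.ext h')) (by decide)
  · exact absurd (hvals 0 2 (Fin.ext h')) (by decide)
  · exact absurd (hvals 1 2 (Fin.ext h')) (by decide)

lemma star_of_deg3 {E : V → V → Prop} (x a b c : V)
    (ha : adjR E x a) (hb : adjR E x b) (hc : adjR E x c)
    (hab : a ≠ b) (hac : a ≠ c) (hbc : b ≠ c) :
    ∃ ε : Fin 3 → Bool, IotHomEx (starRel ε) E := by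
  classical
  set l : Fin 3 → V := fun i => if i.val = 0 then a else if i.val = 1 then b else c with hl
  have hlv0 : l 0 = a := rfl
  have hlv1 : l 1 = b := rfl
  have hlv2 : l 2 = c := rfl
  have hladj : ∀ i, adjR E x (l i) := by
    intro i
    fin_cases i
    · rw [show l ⟨0, by omega⟩ = a from rfl]; exact ha
    · rw [show l ⟨1, by omega⟩ = b from rfl]; exact hb
    · rw [show l ⟨2, by omega⟩ = c from rfl]; exact hc
  have hlinj : ∀ i j : Fin 3, l i = l j → i = j := by
    intro i j hij
    fin_cases i <;> fin_cases j <;>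
      simp only [show l ⟨0, by omega⟩ = a from rfl, show l ⟨1, by omega⟩ = b from rfl,
        show l ⟨2, by omega⟩ = c from rfl] at hij <;>
      first
        | rfl
        | exact absurd hij hab
        | exact absurd hij hac
        | exact absurd hij hbc
        | exact absurd hij.symm hab
        | exact absurd hij.symm hac
        | exact absurd hij.symm hbc
  refine ⟨fun i => if E x (l i) then true else false,
    fun o => Option.elim o x l, ?_, ?_⟩
  · rintro o1 o2 ⟨i, hcase⟩
    rcases hcase with ⟨hbi, rfl, rfl⟩ | ⟨hbi, rfl, rfl⟩
    · show E x (l i)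
      by_cases hE : E x (l i)
      · exact hE
      · dsimp only at hbi; rw [if_neg hE] at hbi; exact absurd hbi (by simp)
    · show E (l i) x
      by_cases hE : E x (l i)
      · dsimp only at hbi; rw [if_pos hE] at hbi; exact absurd hbi (by simp)
      · rcases hladj i with h | h
        · exact absurd h hE
        · exact h
  · have hnbr : ∀ o1 o2 : Option (Fin 3),
        starRel (fun i => if E x (l i) then true else false) o1 o2 →
        (o1 = none ∧ ∃ i, o2 = some i) ∨ (o2 = none ∧ ∃ i, o1 = some i) := by
      rintro o1 o2 ⟨i, hcase⟩
      rcases hcase with ⟨_, rfl, rfl⟩ | ⟨_, rfl, rfl⟩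
      · exact Or.inl ⟨rfl, i, rfl⟩
      · exact Or.inr ⟨rfl, i, rfl⟩
    intro o
    cases o with
    | none =>
      intro y hy z hz heq
      have hy' : ∃ i, y = some i := by
        rcases hy with hy | hy <;> rcases hnbr _ _ hy with ⟨h1, i, h2⟩ | ⟨h1, i, h2⟩
        · exact absurd h2 (by simp)
        · exact ⟨i, h2⟩
        · exact ⟨i, h2⟩
        · exact absurd h2 (by simp)
      have hz' : ∃ i, z = some i := by
        rcases hz with hz | hz <;> rcases hnbr _ _ hz with ⟨h1, i, h2⟩ | ⟨h1, i, h2⟩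
        · exact absurd h2 (by simp)
        · exact ⟨i, h2⟩
        · exact ⟨i, h2⟩
        · exact absurd h2 (by simp)
      obtain ⟨i, rfl⟩ := hy'
      obtain ⟨j, rfl⟩ := hz'
      have heq' : l i = l j := heq
      rw [hlinj i j heq']
    | some i =>
      intro y hy z hz heq
      have hnone : ∀ o', o' ∈ ({z | starRel (fun i => if E x (l i) then true else false) z (some i)} ∪
          {z | starRel (fun i => if E x (l i) then true else false) (some i) z}) → o' = none := by
        intro o' ho'
        rcases ho' with ho' | ho' <;> rcases hnbr _ _ ho' with ⟨h1, jj, h2⟩ | ⟨h1, jj, h2⟩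
        · exact h1
        · exact absurd h1 (by simp)
        · exact absurd h1 (by simp)
        · exact h1
      rw [hnone y hy, hnone z hz]

end Aux16

/-- A finite irreflexive oriented graph `G` has an iot-injective
homomorphism to `T_2^r` iff no oriented graph in `S ∪ P` has an iot-injective
homomorphism to `G`, where `S` consists of all orientations of `K_{1,3}` and `P`
consists of the oriented paths `v_0 … v_{2k}` (`k ≥ 2`) whose arcs among
`{v_1,…,v_{2k-1}}` form two disjoint alternating matchings, with the arc joining
`v_0,v_1` oriented like the arc joining `v_2,v_3` and the arc joining
`v_{2k-1},v_{2k}` oriented like the arc joining `v_{2k-3},v_{2k-2}`. -/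
theorem stmt16 {V : Type} [Fintype V] (E : V → V → Prop)
    (hor : IsOriented E) (hirr : NoLoops E) :
    (∃ f : V → Fin 2, IsHom E T2r f ∧ IotInj E f) ↔
      ¬ ((∃ ε : Fin 3 → Bool, IotHomEx (starRel ε) E) ∨
          (∃ (k : ℕ) (σ : ℕ → Bool), 2 ≤ k ∧
            σ 0 = σ 2 ∧ σ (2 * k - 1) = σ (2 * k - 3) ∧
            (∀ t, 1 ≤ t → t + 2 ≤ 2 * k - 2 → σ t ≠ σ (t + 2)) ∧
            IotHomEx (OPathRel (2 * k) σ) E)) := by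
  constructor
  · rintro ⟨f, hf, hfinj⟩ h
    rcases h with ⟨ε, g, ghom, ginj⟩ | ⟨k, σ, hk, h02, hend, hmid, g, ghom, ginj⟩
    · obtain ⟨chom, cinj⟩ := iot_comp ghom ginj hf hfinj
      exact no_star_to_T2r (f ∘ g) chom cinj
    · obtain ⟨chom, cinj⟩ := iot_comp ghom ginj hf hfinj
      exact no_bad_to_T2r hk h02 hend (f ∘ g) chom cinj
  · intro hno
    have hnostar : ¬ ∃ ε : Fin 3 → Bool, IotHomEx (starRel ε) E := fun h => hno (Or.inl h)
    have hnb : ¬ BadEx E := fun h => hno (Or.inr h)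
    have hdeg : Deg2 E := by
      intro x a b c ha hb hc
      by_contra hcon
      push_neg at hcon
      obtain ⟨hab, hbc, hac⟩ := hcon
      exact hnostar (star_of_deg3 x a b c ha hb hc hab hac hbc)
    classical
    have hcomp := fun x0 => comp_color hor hirr hdeg hnb x0
    choose F hF1 hF2 using hcomp
    let s : Setoid V := ⟨UConn E,
      ⟨fun x => Relation.ReflTransGen.refl, fun h => uconn_symm h,
        fun h1 h2 => Relation.ReflTransGen.trans h1 h2⟩⟩
    let rep : V → V := fun x => (Quotient.mk s x).out
    have hrep1 : ∀ x, UConn E (rep x) x := fun x => @Quotient.mk_out V s x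
    have hrep2 : ∀ x y, UConn E x y → rep x = rep y := by
      intro x y h
      show (Quotient.mk s x).out = (Quotient.mk s y).out
      congr 1
      exact Quotient.sound h
    refine ⟨fun x => F (rep x) x, ?_, ?_⟩
    · intro x y hxy
      have h2 : rep x = rep y := hrep2 _ _ (uconn_adj (Or.inl hxy))
      show T2r (F (rep x) x) (F (rep y) y)
      rw [← h2]
      exact hF1 (rep x) x y (hrep1 x) hxy
    · intro x y hy z hz heq
      by_cases hyz : y = z
      · exact hyz
      · exfalso
        have hay : adjR E x y := by
          rcases hy with h | h
          · exact Or.inr h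
          · exact Or.inl h
        have haz : adjR E x z := by
          rcases hz with h | h
          · exact Or.inr h
          · exact Or.inl h
        have h1 : rep y = rep x := hrep2 _ _ (uconn_symm (uconn_adj hay))
        have h2 : rep z = rep x := hrep2 _ _ (uconn_symm (uconn_adj haz))
        dsimp only at heq
        rw [h1, h2] at heq
        exact hF2 (rep x) x y z (hrep1 x) hay haz hyz heq
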